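/- arXiv:2210.14026 — 2 statements merged into one kernel-verified Lean document; each statement's English description precedes it below -/
import Mathlib

section
/- Let W^t, t = 1,...,T, be symmetric doubly stochastic n×n matrices and suppose ρ ∈ [0,1) satisfies max{|λ_2((W^t)ᵀ W^t)|, |λ_n((W^t)ᵀ W^t)|} ≤ ρ for all t. Then for every standard basis vector e_i and all T ≥ 0, ‖(1/n)·𝟙_n − (∏_{t=1}^T W^t) e_i‖² ≤ ((n−1)/n)·ρ^T. -/
open Matrix Finset

/-- for symmetric doubly stochastic matrices `W t` whose matrices
`(W t)ᵀ (W t)` have all eigenvalues on the orthogonal complement of the all-ones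
vector bounded by `ρ` in absolute value (i.e. `max {|λ₂|, |λₙ|} ≤ ρ`), the squared
distance of `(∏_{t=1}^T W t) eᵢ` from the uniform vector decays like `ρ^T`. -/
theorem product_doubly_stochastic_consensus_bound
    (n T : ℕ) (hn : 0 < n) (W : ℕ → Matrix (Fin n) (Fin n) ℝ) (ρ : ℝ)
    (hρ0 : 0 ≤ ρ) (hρ1 : ρ < 1)
    (hsymm : ∀ t, (W t).IsSymm)
    (hnonneg : ∀ t i j, 0 ≤ W t i j)
    (hcol : ∀ t j, ∑ i, W t i j = 1)
    (hrow : ∀ t i, ∑ j, W t i j = 1)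
    (heig : ∀ t, ∀ v : Fin n → ℝ, (∑ j, v j = 0) →
      |v ⬝ᵥ (((W t)ᵀ * W t).mulVec v)| ≤ ρ * (v ⬝ᵥ v))
    (i : Fin n) :
    ∑ j, ((1 / (n : ℝ)) -
        (((List.range T).map (fun k => W (T - k))).prod.mulVec
          (Pi.single i 1 : Fin n → ℝ)) j) ^ 2
      ≤ (((n : ℝ) - 1) / n) * ρ ^ T := by
  have hre : ∀ T : ℕ, (List.range (T+1)).map (fun k => W (T+1 - k)) =
      W (T+1) :: (List.range T).map (fun k => W (T - k)) := by
    intro T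
    rw [List.range_succ_eq_map]
    simp [List.map_map, Function.comp]
  -- column sums of the product are 1
  have hPcol : ∀ T : ℕ, ∀ j, ∑ a, ((List.range T).map (fun k => W (T - k))).prod a j = 1 := by
    intro T
    induction T with
    | zero => intro j; simp [Matrix.one_apply]
    | succ T ih =>
      intro j
      rw [hre, List.prod_cons]
      simp only [Matrix.mul_apply]
      rw [Finset.sum_comm]
      simp_rw [← Finset.sum_mul, hcol, one_mul]
      exact ih j
  -- the error vector sums to zero
  have hsum0 : ∀ T : ℕ, ∑ j, ((1 / (n : ℝ)) -
      (((List.range T).map (fun k => W (T - k))).prod.mulVec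
        (Pi.single i 1 : Fin n → ℝ)) j) = 0 := by
    intro T
    rw [Finset.sum_sub_distrib]
    have h1 : ∑ j : Fin n,
        (((List.range T).map (fun k => W (T - k))).prod.mulVec
          (Pi.single i 1 : Fin n → ℝ)) j = 1 := by
      simp only [Matrix.mulVec, dotProduct]
      rw [Finset.sum_comm]
      simp_rw [← Finset.sum_mul, hPcol, one_mul]
      simp
    rw [h1]
    simp [Finset.card_univ]
    field_simp
    norm_num
  induction T with
  | zero =>
    simp only [List.range_zero, List.map_nil, List.prod_nil, Matrix.one_mulVec, pow_zero,
      mul_one]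
    rw [← Finset.add_sum_erase _ _ (Finset.mem_univ i)]
    have h2 : ∀ j ∈ Finset.univ.erase i,
        ((1 / (n : ℝ)) - (Pi.single i 1 : Fin n → ℝ) j) ^ 2 = (1 / (n : ℝ)) ^ 2 := by
      intro j hj
      rw [Pi.single_eq_of_ne (Finset.ne_of_mem_erase hj)]
      ring
    rw [Finset.sum_congr rfl h2, Finset.sum_const, Finset.card_erase_of_mem (Finset.mem_univ i),
      Finset.card_univ, Fintype.card_fin, Pi.single_eq_same]
    have hn1 : ((n - 1 : ℕ) : ℝ) = (n : ℝ) - 1 := by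
      rw [Nat.cast_sub hn]; simp
    rw [nsmul_eq_mul, hn1]
    have hnR : (0:ℝ) < n := by exact_mod_cast hn
    apply le_of_eq
    field_simp
    ring
  | succ T ih =>
    set v : Fin n → ℝ := fun j => (1 / (n : ℝ)) -
      (((List.range T).map (fun k => W (T - k))).prod.mulVec
        (Pi.single i 1 : Fin n → ℝ)) j with hv
    have hstep : ∀ j, (1 / (n : ℝ)) -
        (((List.range (T+1)).map (fun k => W (T+1 - k))).prod.mulVec
          (Pi.single i 1 : Fin n → ℝ)) j = (W (T+1)).mulVec v j := by
      intro j
      rw [hre, List.prod_cons, ← Matrix.mulVec_mulVec]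
      simp only [Matrix.mulVec, dotProduct, hv]
      simp_rw [mul_sub]
      rw [Finset.sum_sub_distrib, ← Finset.sum_mul, hrow, one_mul]
    simp only [hstep]
    have hdot : ∑ j, ((W (T+1)).mulVec v j) ^ 2 = v ⬝ᵥ (((W (T+1))ᵀ * W (T+1)).mulVec v) := by
      rw [← Matrix.mulVec_mulVec, Matrix.dotProduct_mulVec, Matrix.vecMul_transpose]
      simp [dotProduct, sq]
    rw [hdot]
    calc v ⬝ᵥ (((W (T+1))ᵀ * W (T+1)).mulVec v)
        ≤ |v ⬝ᵥ (((W (T+1))ᵀ * W (T+1)).mulVec v)| := le_abs_self _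
      _ ≤ ρ * (v ⬝ᵥ v) := heig (T+1) v (hsum0 T)
      _ ≤ ρ * (((n : ℝ) - 1) / n * ρ ^ T) := by
          apply mul_le_mul_of_nonneg_left _ hρ0
          have : v ⬝ᵥ v = ∑ j, v j ^ 2 := by simp [dotProduct, sq]
          rw [this]; exact ih
      _ = ((n : ℝ) - 1) / n * ρ ^ (T+1) := by ring
end

section
/- Let f_1,...,f_n : ℝ^d → ℝ be L-smooth, p a probability vector, and suppose E_{i∼p}‖∇f(x) − ∇f_i(x)‖² ≤ ζ² for all x, where f = Σ_i p_i f_i. Then for any points x_1,...,x_n ∈ ℝ^d with average x̄ = (1/n)Σ_i x_i (or any fixed x̄), Σ_{i=1}^n p_i ‖∇f_i(x_i)‖² ≤ 2‖Σ_{i=1}^n p_i ∇f_i(x_i)‖² + 12 L² Σ_{i=1}^n p_i ‖x̄ − x_i‖² + 6ζ². -/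
open Finset
open scoped RealInnerProductSpace

lemma variance_bound_aux {E : Type*} [NormedAddCommGroup E] [InnerProductSpace ℝ E]
    {n : ℕ} (p : Fin n → ℝ) (v : Fin n → E) (g : E)
    (hp1 : ∑ i, p i = 1) :
    ∑ i, p i * ‖v i‖ ^ 2 ≤ ‖∑ i, p i • v i‖ ^ 2 + ∑ i, p i * ‖v i - g‖ ^ 2 := by
  set A := ∑ i, p i • v i with hA
  have hAg : ⟪A, g⟫ = ∑ i, p i * ⟪v i, g⟫ := by
    rw [hA, sum_inner]
    exact Finset.sum_congr rfl fun i _ => real_inner_smul_left _ _ _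
  have hsum : ∑ i, p i * ‖v i - g‖ ^ 2
      = ∑ i, p i * ‖v i‖ ^ 2 - 2 * ⟪A, g⟫ + ‖g‖ ^ 2 := by
    calc ∑ i, p i * ‖v i - g‖ ^ 2
        = ∑ i, (p i * ‖v i‖ ^ 2 - 2 * (p i * ⟪v i, g⟫) + p i * ‖g‖ ^ 2) := by
          refine Finset.sum_congr rfl fun i _ => ?_
          have : ‖v i - g‖ ^ 2 = ‖v i‖ ^ 2 - 2 * ⟪v i, g⟫ + ‖g‖ ^ 2 := by
            rw [norm_sub_sq_real]
          rw [this]; ring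
      _ = ∑ i, p i * ‖v i‖ ^ 2 - 2 * ∑ i, (p i * ⟪v i, g⟫)
            + (∑ i, p i) * ‖g‖ ^ 2 := by
          rw [Finset.sum_add_distrib, Finset.sum_sub_distrib, ← Finset.mul_sum,
            Finset.sum_mul]
      _ = ∑ i, p i * ‖v i‖ ^ 2 - 2 * ⟪A, g⟫ + ‖g‖ ^ 2 := by
          rw [hAg, hp1, one_mul]
  have hpos : (0:ℝ) ≤ ‖A - g‖ ^ 2 := sq_nonneg _
  have hexp2 : ‖A - g‖ ^ 2 = ‖A‖ ^ 2 - 2 * ⟪A, g⟫ + ‖g‖ ^ 2 := by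
    rw [norm_sub_sq_real]
  linarith [hsum, hexp2 ▸ hpos]

/-- under L-smoothness of each fᵢ and bounded inter-client
gradient variance ζ², for any points x₁,…,xₙ and any fixed x̄,
Σᵢ pᵢ ‖∇fᵢ(xᵢ)‖² ≤ 2‖Σᵢ pᵢ ∇fᵢ(xᵢ)‖² + 12 L² Σᵢ pᵢ ‖x̄ − xᵢ‖² + 6ζ². -/
theorem gradient_second_moment_bound
    {d n : ℕ} (L ζ : ℝ) (p : Fin n → ℝ)
    (f : Fin n → EuclideanSpace ℝ (Fin d) → ℝ)
    (hp0 : ∀ i, 0 ≤ p i) (hp1 : ∑ i, p i = 1)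
    (hdiff : ∀ i, Differentiable ℝ (f i))
    (hL : ∀ i x y, ‖gradient (f i) x - gradient (f i) y‖ ≤ L * ‖x - y‖)
    (hζ : ∀ i x, ‖gradient (fun y => ∑ j, p j * f j y) x - gradient (f i) x‖ ^ 2 ≤ ζ ^ 2)
    (x : Fin n → EuclideanSpace ℝ (Fin d)) (xbar : EuclideanSpace ℝ (Fin d)) :
    ∑ i, p i * ‖gradient (f i) (x i)‖ ^ 2
      ≤ 2 * ‖∑ i, p i • gradient (f i) (x i)‖ ^ 2
        + 12 * L ^ 2 * ∑ i, p i * ‖xbar - x i‖ ^ 2 + 6 * ζ ^ 2 := by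
  set v : Fin n → EuclideanSpace ℝ (Fin d) := fun i => gradient (f i) (x i) with hv
  set g : EuclideanSpace ℝ (Fin d) :=
    gradient (fun y => ∑ j, p j * f j y) xbar with hg
  have key := variance_bound_aux p v g hp1
  -- pointwise bound on ‖v i - g‖²
  have hpt : ∀ i, ‖v i - g‖ ^ 2 ≤ 2 * L ^ 2 * ‖xbar - x i‖ ^ 2 + 2 * ζ ^ 2 := by
    intro i
    have h1 : ‖v i - gradient (f i) xbar‖ ≤ L * ‖x i - xbar‖ := hL i (x i) xbar
    have h2 : ‖g - gradient (f i) xbar‖ ^ 2 ≤ ζ ^ 2 := hζ i xbar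
    have htri : ‖v i - g‖ ≤ ‖v i - gradient (f i) xbar‖ + ‖g - gradient (f i) xbar‖ := by
      have : v i - g = (v i - gradient (f i) xbar) - (g - gradient (f i) xbar) := by
        abel
      rw [this]
      exact norm_sub_le _ _
    have hnn1 : (0:ℝ) ≤ ‖v i - gradient (f i) xbar‖ := norm_nonneg _
    have hnn2 : (0:ℝ) ≤ ‖g - gradient (f i) xbar‖ := norm_nonneg _
    have hnn3 : (0:ℝ) ≤ ‖v i - g‖ := norm_nonneg _
    have hrev : ‖x i - xbar‖ = ‖xbar - x i‖ := norm_sub_rev _ _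
    rw [hrev] at h1
    nlinarith [sq_nonneg (‖v i - gradient (f i) xbar‖ - ‖g - gradient (f i) xbar‖)]
  have hsum2 : ∑ i, p i * ‖v i - g‖ ^ 2
      ≤ 2 * L ^ 2 * (∑ i, p i * ‖xbar - x i‖ ^ 2) + 2 * ζ ^ 2 := by
    calc ∑ i, p i * ‖v i - g‖ ^ 2
        ≤ ∑ i, p i * (2 * L ^ 2 * ‖xbar - x i‖ ^ 2 + 2 * ζ ^ 2) := by
          refine Finset.sum_le_sum fun i _ => ?_
          exact mul_le_mul_of_nonneg_left (hpt i) (hp0 i)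
      _ = 2 * L ^ 2 * (∑ i, p i * ‖xbar - x i‖ ^ 2) + (∑ i, p i) * (2 * ζ ^ 2) := by
          rw [Finset.mul_sum, Finset.sum_mul, ← Finset.sum_add_distrib]
          exact Finset.sum_congr rfl fun i _ => by ring
      _ = 2 * L ^ 2 * (∑ i, p i * ‖xbar - x i‖ ^ 2) + 2 * ζ ^ 2 := by
          rw [hp1, one_mul]
  have hS : (0:ℝ) ≤ ∑ i, p i * ‖xbar - x i‖ ^ 2 :=
    Finset.sum_nonneg fun i _ => mul_nonneg (hp0 i) (sq_nonneg _)
  have hAnn : (0:ℝ) ≤ ‖∑ i, p i • v i‖ ^ 2 := sq_nonneg _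
  have hL2 : (0:ℝ) ≤ L ^ 2 := sq_nonneg _
  nlinarith [sq_nonneg ζ, mul_nonneg hL2 hS]
end
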